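/- (Corollary: spectral gap for positive semi-definite reversible chains.) Suppose the probability measure π is reversible and invariant for the Markov operator P, that π(K) > 0, that P satisfies the drift condition PV(x) ≤ (1−λ)V(x) + b·1_K(x) for all x and the minorization condition P1_A(x) ≥ α ν(A) 1_K(x) for all A ∈ ℬ and x, and that P is positive semi-definite on L²(π), i.e. ⟨f, Pf⟩_π ≥ 0 for all f ∈ L²(π). Then for every f ∈ L²(π) with ∫ f dπ = 0, ‖Pf‖_{2,π} ≤ (1 − β₊) ‖f‖_{2,π}, where β₊ = λ/(1 + 2b/α). -/

import Mathlib

open MeasureTheory ProbabilityTheory Set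
open scoped ENNReal NNReal

section SpectralGapAux

variable {Y : Type*} [MeasurableSpace Y]

/-- Product of two L² functions is integrable. -/
private lemma mul_int {μ : Measure Y} {u v : Y → ℝ} (hu : MemLp u 2 μ) (hv : MemLp v 2 μ) :
    Integrable (fun x => u x * v x) μ := by
  have hu2 : Integrable (fun x => u x ^ 2) μ :=
    (memLp_two_iff_integrable_sq hu.aestronglyMeasurable).1 hu
  have hv2 : Integrable (fun x => v x ^ 2) μ :=
    (memLp_two_iff_integrable_sq hv.aestronglyMeasurable).1 hv
  refine ((hu2.add hv2).const_mul ((1:ℝ)/2)).mono'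
    (hu.aestronglyMeasurable.mul hv.aestronglyMeasurable) ?_
  filter_upwards with x
  rw [Real.norm_eq_abs, abs_mul]
  simp only [Pi.add_apply]
  nlinarith [sq_nonneg (|u x| - |v x|), sq_abs (u x), sq_abs (v x),
    abs_nonneg (u x), abs_nonneg (v x)]

private lemma two_mul_le (u v a c : ℝ) (ha : 0 < a) (hc : 0 < c) :
    2 * (u * v) ≤ u ^ 2 * (c / a) + v ^ 2 * (a / c) := by
  have key : u ^ 2 * (c / a) + v ^ 2 * (a / c) - 2 * (u * v) = (u * c - v * a) ^ 2 / (a * c) := by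
    field_simp
    ring
  have h2 : 0 ≤ (u * c - v * a) ^ 2 / (a * c) := by positivity
  linarith

private lemma jensen_sq {μ : Measure Y} [IsProbabilityMeasure μ] {h : Y → ℝ}
    (hi : Integrable h μ) (hi2 : Integrable (fun x => h x ^ 2) μ) :
    (∫ x, h x ∂μ) ^ 2 ≤ ∫ x, h x ^ 2 ∂μ := by
  set m := ∫ x, h x ∂μ with hm
  have h0 : 0 ≤ ∫ x, (h x - m) ^ 2 ∂μ := integral_nonneg fun x => sq_nonneg _
  have e : ∫ x, (h x - m) ^ 2 ∂μ = (∫ x, h x ^ 2 ∂μ) - 2 * m * m + m ^ 2 := by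
    have hsub : Integrable (fun x => h x ^ 2 - 2 * m * h x) μ := hi2.sub (hi.const_mul (2 * m))
    rw [show (fun x => (h x - m) ^ 2) = fun x => (h x ^ 2 - 2 * m * h x) + m ^ 2 from
      funext fun x => by ring]
    rw [integral_add hsub (integrable_const _),
      integral_sub hi2 (hi.const_mul (2 * m)), integral_const_mul, integral_const]
    simp [measure_univ]
    exact Or.inl rfl
  nlinarith [h0, e]

/-- Second moment bound w.r.t. an auxiliary probability measure. -/
private lemma nu_moment (ν : Measure Y) [IsProbabilityMeasure ν] {h : Y → ℝ}
    (hm : Measurable h) (t : ℝ) :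
    ENNReal.ofReal ((t - ∫ y, h y ∂ν) ^ 2) ≤ ∫⁻ y, ENNReal.ofReal ((t - h y) ^ 2) ∂ν := by
  by_cases hL : MemLp h 2 ν
  · have hi : Integrable h ν := hL.integrable one_le_two
    have hi2 : Integrable (fun y => h y ^ 2) ν :=
      (memLp_two_iff_integrable_sq hm.aestronglyMeasurable).1 hL
    have hi3 : Integrable (fun y => (t - h y) ^ 2) ν := by
      rw [show (fun y => (t - h y) ^ 2) = fun y => t ^ 2 - (2 * t) * h y + h y ^ 2 from
        funext fun y => by ring]
      exact ((integrable_const _).sub (hi.const_mul _)).add hi2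
    rw [← ofReal_integral_eq_lintegral_ofReal hi3 (Filter.Eventually.of_forall fun y => sq_nonneg _)]
    apply ENNReal.ofReal_le_ofReal
    set c := ∫ y, h y ∂ν with hc
    have e : ∫ y, (t - h y) ^ 2 ∂ν = t ^ 2 - 2 * t * c + ∫ y, h y ^ 2 ∂ν := by
      have hsub : Integrable (fun y => t ^ 2 - 2 * t * h y) ν :=
        (integrable_const _).sub (hi.const_mul (2 * t))
      rw [show (fun y => (t - h y) ^ 2) = fun y => (t ^ 2 - 2 * t * h y) + h y ^ 2 from
        funext fun y => by ring]
      rw [integral_add hsub hi2,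
        integral_sub (integrable_const _) (hi.const_mul (2 * t)), integral_const_mul, integral_const]
      simp [measure_univ]
      exact Or.inl rfl
    have hcs : c ^ 2 ≤ ∫ y, h y ^ 2 ∂ν := jensen_sq hi hi2
    nlinarith [e, hcs]
  · have htop : ∫⁻ y, ENNReal.ofReal ((t - h y) ^ 2) ∂ν = ⊤ := by
      by_contra hne
      apply hL
      have hi3 : Integrable (fun y => (t - h y) ^ 2) ν :=
        ⟨((measurable_const.sub hm).pow_const 2).aestronglyMeasurable,
          (hasFiniteIntegral_iff_ofReal
            (Filter.Eventually.of_forall fun y => sq_nonneg _)).2 (lt_top_iff_ne_top.2 hne)⟩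
      have hL3 : MemLp (fun y => t - h y) 2 ν :=
        (memLp_two_iff_integrable_sq (measurable_const.sub hm).aestronglyMeasurable).2 hi3
      have h4 : MemLp ((fun _ => t) - fun y => t - h y) 2 ν := (memLp_const t).sub hL3
      have : ((fun _ => t) - fun y => t - h y) = h := funext fun y => by
        simp [Pi.sub_apply]
      rwa [this] at h4
    rw [htop]
    exact le_top

private lemma combine_ineq (lam b α T I2 S c : ℝ) (hlam : 0 < lam) (hα : 0 < α) (hb : 0 ≤ b)
    (dA : T + c ^ 2 ≤ (1 - lam) * (I2 + c ^ 2) + b * S)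
    (dB : α * S ≤ 2 * ((I2 + c ^ 2) - (T + c ^ 2))) :
    T ≤ (1 - lam / (1 + 2 * b / α)) * I2 := by
  have hd : (0:ℝ) ≤ 2 * b / α := by positivity
  have hpos : (0:ℝ) < 1 + 2 * b / α := by positivity
  have hbS : b * S ≤ (2 * b / α) * (I2 - T) := by
    have h1 : (b / α) * (α * S) ≤ (b / α) * (2 * ((I2 + c ^ 2) - (T + c ^ 2))) :=
      mul_le_mul_of_nonneg_left dB (div_nonneg hb hα.le)
    have e1 : (b / α) * (α * S) = b * S := by
      field_simp
    have e2 : (b / α) * (2 * ((I2 + c ^ 2) - (T + c ^ 2))) = (2 * b / α) * (I2 - T) := by ring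
    rw [e1, e2] at h1
    exact h1
  have hTle : T ≤ (1 - lam) * I2 + b * S := by nlinarith [sq_nonneg c]
  have hkey : (1 + 2 * b / α) * T ≤ (1 + 2 * b / α - lam) * I2 := by nlinarith
  have e3 : (1 - lam / (1 + 2 * b / α)) = (1 + 2 * b / α - lam) / (1 + 2 * b / α) := by
    rw [eq_div_iff hpos.ne', sub_mul, div_mul_cancel₀ _ hpos.ne']
    ring
  rw [e3, div_mul_eq_mul_div, le_div_iff₀ hpos]
  nlinarith [hkey]

end SpectralGapAux

/-- **Corollary.** Under the drift and minorization conditions, a reversible Markov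
operator `P` which is positive semi-definite on `L²(π)` admits the spectral gap
`β₊ = λ / (1 + 2 b / α)`. -/
theorem positive_semidefinite_spectral_gap
    {X : Type*} [MeasurableSpace X]
    (κ : Kernel X X) [IsMarkovKernel κ]
    (π : Measure X) [IsProbabilityMeasure π]
    -- invariance: ∫ Pf dπ = ∫ f dπ for all bounded measurable f
    (hinv : ∀ f : X → ℝ, Measurable f → (∃ C : ℝ, ∀ x, |f x| ≤ C) →
      ∫ x, (∫ y, f y ∂(κ x)) ∂π = ∫ x, f x ∂π)
    -- reversibility: ⟨f, Pg⟩_π = ⟨Pf, g⟩_π for all f, g ∈ L²(π)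
    (hrev : ∀ f g : X → ℝ, MemLp f 2 π → MemLp g 2 π →
      ∫ x, f x * (∫ y, g y ∂(κ x)) ∂π = ∫ x, (∫ y, f y ∂(κ x)) * g x ∂π)
    (V : X → ℝ) (hVmeas : Measurable V) (hV1 : ∀ x, 1 ≤ V x)
    (lam b : ℝ) (hlam : 0 < lam) (hlam1 : lam ≤ 1) (hb : 0 ≤ b)
    (K : Set X) (hK : MeasurableSet K) (hπK : 0 < π K)
    (α : ℝ) (hα : 0 < α) (ν : Measure X) [IsProbabilityMeasure ν]
    -- drift condition (v4): PV ≤ (1-λ) V + b 1_K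
    (hdrift : ∀ x, ∫⁻ y, ENNReal.ofReal (V y) ∂(κ x)
      ≤ ENNReal.ofReal ((1 - lam) * V x + b * K.indicator 1 x))
    -- minorization condition: P 1_A(x) ≥ α ν(A) 1_K(x)
    (hminor : ∀ A : Set X, MeasurableSet A → ∀ x ∈ K, ENNReal.ofReal α * ν A ≤ κ x A)
    -- positive semi-definiteness of P on L²(π)
    (hpsd : ∀ f : X → ℝ, MemLp f 2 π → 0 ≤ ∫ x, f x * (∫ y, f y ∂(κ x)) ∂π) :
    ∀ f : X → ℝ, MemLp f 2 π → ∫ x, f x ∂π = 0 →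
      Real.sqrt (∫ x, (∫ y, f y ∂(κ x)) ^ 2 ∂π)
        ≤ (1 - lam / (1 + 2 * b / α)) * Real.sqrt (∫ x, (f x) ^ 2 ∂π) := by
  intro f hf hf0
  -- measurable representative
  obtain ⟨g, hgsm, hfg⟩ : ∃ g, StronglyMeasurable g ∧ f =ᵐ[π] g :=
    ⟨hf.1.mk f, hf.1.stronglyMeasurable_mk, hf.1.ae_eq_mk⟩
  have hgm : Measurable g := hgsm.measurable
  have hg : MemLp g 2 π := hf.ae_eq hfg
  have hg0 : ∫ x, g x ∂π = 0 := by rw [← integral_congr_ae hfg]; exact hf0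
  have hV0 : ∀ x, (0:ℝ) < V x := fun x => lt_of_lt_of_le zero_lt_one (hV1 x)
  -- ## invariance of π, at the level of the measure
  have hbind : π.bind κ = π := by
    ext A hA
    rw [Measure.bind_apply hA κ.measurable.aemeasurable]
    have h1 := hinv (A.indicator 1) (measurable_one.indicator hA)
      ⟨1, fun x => by by_cases hx : x ∈ A <;> simp [hx]⟩
    have h2 : ∀ x : X, ∫ y, A.indicator 1 y ∂(κ x) = (κ x A).toReal := fun x =>
      integral_indicator_one hA
    have h3 : ∫ x, A.indicator (1 : X → ℝ) x ∂π = (π A).toReal := integral_indicator_one hA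
    have h4 : ∫ x, ((κ x) A).toReal ∂π = (π A).toReal := by
      rw [← h3, ← h1]
      exact integral_congr_ae (Filter.Eventually.of_forall fun x => (h2 x).symm)
    have h5 : ∫ x, ((κ x) A).toReal ∂π = (∫⁻ x, κ x A ∂π).toReal :=
      integral_toReal ((κ.measurable_coe hA).aemeasurable)
        (Filter.Eventually.of_forall fun x => measure_lt_top _ _)
    have hfin : ∫⁻ x, κ x A ∂π ≠ ⊤ := by
      refine ne_of_lt (lt_of_le_of_lt (lintegral_mono fun x => prob_le_one) ?_)
      simp
    exact (ENNReal.toReal_eq_toReal_iff' hfin (measure_ne_top π A)).1 (h5.symm.trans h4)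
  -- lintegral invariance
  have hlin : ∀ h : X → ℝ≥0∞, Measurable h →
      ∫⁻ x, ∫⁻ y, h y ∂(κ x) ∂π = ∫⁻ x, h x ∂π := by
    intro h hh
    have := Measure.lintegral_bind (m := π) (μ := fun x => κ x) κ.measurable.aemeasurable hh.aemeasurable
    rw [hbind] at this
    exact this.symm
  -- marginals of π ⊗ₘ κ
  have hsnd : (π ⊗ₘ κ).map Prod.snd = π := by
    ext A hA
    rw [Measure.map_apply measurable_snd hA,
      show Prod.snd ⁻¹' A = (univ : Set X) ×ˢ A by ext z; simp,
      Measure.compProd_apply_prod MeasurableSet.univ hA, Measure.restrict_univ,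
      ← Measure.bind_apply hA κ.measurable.aemeasurable, hbind]
  have hfst : (π ⊗ₘ κ).map Prod.fst = π := Measure.fst_compProd π κ
  -- reversibility at the level of sets
  have rev_sets : ∀ A B : Set X, MeasurableSet A → MeasurableSet B →
      ∫⁻ x in A, κ x B ∂π = ∫⁻ x in B, κ x A ∂π := by
    intro A B hA hB
    have mA : MemLp (A.indicator (1 : X → ℝ)) 2 π :=
      memLp_indicator_const 2 hA 1 (Or.inr (measure_ne_top π A))
    have mB : MemLp (B.indicator (1 : X → ℝ)) 2 π :=
      memLp_indicator_const 2 hB 1 (Or.inr (measure_ne_top π B))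
    have h := hrev _ _ mA mB
    have eA : ∀ x : X, ∫ y, A.indicator 1 y ∂(κ x) = ((κ x) A).toReal := fun x =>
      integral_indicator_one hA
    have eB : ∀ x : X, ∫ y, B.indicator 1 y ∂(κ x) = ((κ x) B).toReal := fun x =>
      integral_indicator_one hB
    have hL : ∫ x, A.indicator (1 : X → ℝ) x * ((κ x) B).toReal ∂π
        = ∫ x, ((κ x) A).toReal * B.indicator (1 : X → ℝ) x ∂π := by
      simp only [eA, eB] at h
      exact h
    have e1 : ∫ x, A.indicator (1 : X → ℝ) x * ((κ x) B).toReal ∂π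
        = (∫⁻ x in A, κ x B ∂π).toReal := by
      rw [show (fun x => A.indicator (1 : X → ℝ) x * ((κ x) B).toReal)
          = fun x => A.indicator (fun x => ((κ x) B).toReal) x from funext fun x => by
        by_cases hx : x ∈ A <;> simp [hx]]
      rw [integral_indicator hA]
      exact integral_toReal ((κ.measurable_coe hB).aemeasurable)
        (Filter.Eventually.of_forall fun x => measure_lt_top _ _)
    have e2 : ∫ x, ((κ x) A).toReal * B.indicator (1 : X → ℝ) x ∂π
        = (∫⁻ x in B, κ x A ∂π).toReal := by
      rw [show (fun x => ((κ x) A).toReal * B.indicator (1 : X → ℝ) x)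
          = fun x => B.indicator (fun x => ((κ x) A).toReal) x from funext fun x => by
        by_cases hx : x ∈ B <;> simp [hx]]
      rw [integral_indicator hB]
      exact integral_toReal ((κ.measurable_coe hA).aemeasurable)
        (Filter.Eventually.of_forall fun x => measure_lt_top _ _)
    have fin : ∀ (S T : Set X), ∫⁻ x in S, κ x T ∂π ≠ ⊤ := by
      intro S T
      refine ne_of_lt (lt_of_le_of_lt (lintegral_mono fun x => prob_le_one) ?_)
      calc ∫⁻ _ in S, 1 ∂π = π S := by simp
        _ < ⊤ := measure_lt_top _ _
    exact (ENNReal.toReal_eq_toReal_iff' (fin A B) (fin B A)).1 (by rw [← e1, ← e2]; exact hL)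
  -- reversibility: the joint measure is symmetric
  have hswap : (π ⊗ₘ κ).map Prod.swap = π ⊗ₘ κ := by
    haveI : IsProbabilityMeasure ((π ⊗ₘ κ).map Prod.swap) :=
      Measure.isProbabilityMeasure_map measurable_swap.aemeasurable
    refine ext_of_generate_finite _ generateFrom_prod.symm isPiSystem_prod ?_ (by simp)
    rintro s ⟨A, hA, B, hB, rfl⟩
    rw [Measure.map_apply measurable_swap ((hA : MeasurableSet A).prod hB),
      preimage_swap_prod, Measure.compProd_apply_prod hB hA,
      Measure.compProd_apply_prod hA hB]
    exact rev_sets B A hB hA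
  -- ## the Markov operator P
  have Pmeas : ∀ h : X → ℝ, Measurable h → Measurable (fun x => ∫ y, h y ∂(κ x)) := by
    intro h hm
    exact (MeasureTheory.StronglyMeasurable.integral_kernel_prod_right (κ := κ)
      (f := fun _ y => h y) ((hm.comp measurable_snd).stronglyMeasurable)).measurable
  have hsq_int : ∀ h : X → ℝ, MemLp h 2 π → Integrable (fun x => h x ^ 2) π := fun h hh =>
    (memLp_two_iff_integrable_sq hh.aestronglyMeasurable).1 hh
  -- pointwise Jensen for the kernel
  have hPle : ∀ (h : X → ℝ), Measurable h → ∀ x,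
      ENNReal.ofReal ((∫ y, h y ∂(κ x)) ^ 2) ≤ ∫⁻ y, ENNReal.ofReal (h y ^ 2) ∂(κ x) := by
    intro h hm x
    by_cases hfin : ∫⁻ y, ENNReal.ofReal (h y ^ 2) ∂(κ x) = ⊤
    · rw [hfin]; exact le_top
    · have hint2 : Integrable (fun y => h y ^ 2) (κ x) :=
        ⟨((hm.pow_const 2)).aestronglyMeasurable,
          (hasFiniteIntegral_iff_ofReal
            (Filter.Eventually.of_forall fun y => sq_nonneg _)).2 (lt_top_iff_ne_top.2 hfin)⟩
      have hL2 : MemLp h 2 (κ x) := (memLp_two_iff_integrable_sq hm.aestronglyMeasurable).2 hint2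
      have hint : Integrable h (κ x) := hL2.integrable one_le_two
      calc ENNReal.ofReal ((∫ y, h y ∂(κ x)) ^ 2)
          ≤ ENNReal.ofReal (∫ y, h y ^ 2 ∂(κ x)) :=
            ENNReal.ofReal_le_ofReal (jensen_sq hint hint2)
        _ = ∫⁻ y, ENNReal.ofReal (h y ^ 2) ∂(κ x) :=
            ofReal_integral_eq_lintegral_ofReal hint2
              (Filter.Eventually.of_forall fun y => sq_nonneg _)
  have hlintsq : ∀ h : X → ℝ, Measurable h → MemLp h 2 π →
      ∫⁻ x, ∫⁻ y, ENNReal.ofReal (h y ^ 2) ∂(κ x) ∂π = ENNReal.ofReal (∫ x, h x ^ 2 ∂π) := by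
    intro h hm hL2
    rw [hlin _ ((hm.pow_const 2).ennreal_ofReal)]
    exact (ofReal_integral_eq_lintegral_ofReal (hsq_int h hL2)
      (Filter.Eventually.of_forall fun x => sq_nonneg _)).symm
  have Pmem : ∀ h : X → ℝ, Measurable h → MemLp h 2 π →
      MemLp (fun x => ∫ y, h y ∂(κ x)) 2 π := by
    intro h hm hL2
    refine (memLp_two_iff_integrable_sq (Pmeas h hm).aestronglyMeasurable).2
      ⟨((Pmeas h hm).pow_const 2).aestronglyMeasurable, ?_⟩
    rw [hasFiniteIntegral_iff_ofReal (Filter.Eventually.of_forall fun x => sq_nonneg _)]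
    calc ∫⁻ x, ENNReal.ofReal ((∫ y, h y ∂(κ x)) ^ 2) ∂π
        ≤ ∫⁻ x, ∫⁻ y, ENNReal.ofReal (h y ^ 2) ∂(κ x) ∂π := lintegral_mono (hPle h hm)
      _ = ENNReal.ofReal (∫ x, h x ^ 2 ∂π) := hlintsq h hm hL2
      _ < ⊤ := ENNReal.ofReal_lt_top
  have aeIntKer : ∀ h : X → ℝ, Measurable h → MemLp h 2 π →
      ∀ᵐ x ∂π, Integrable h (κ x) := by
    intro h hm hL2
    have hfin : ∫⁻ x, ∫⁻ y, ENNReal.ofReal (h y ^ 2) ∂(κ x) ∂π ≠ ⊤ := by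
      rw [hlintsq h hm hL2]; exact ENNReal.ofReal_ne_top
    have hae : ∀ᵐ x ∂π, ∫⁻ y, ENNReal.ofReal (h y ^ 2) ∂(κ x) < ⊤ :=
      ae_lt_top (Measurable.lintegral_kernel_prod_right
        (((hm.comp measurable_snd).pow_const 2).ennreal_ofReal)) hfin
    filter_upwards [hae] with x hx
    have hint2 : Integrable (fun y => h y ^ 2) (κ x) :=
      ⟨((hm.pow_const 2)).aestronglyMeasurable,
        (hasFiniteIntegral_iff_ofReal
          (Filter.Eventually.of_forall fun y => sq_nonneg _)).2 hx⟩
    exact ((memLp_two_iff_integrable_sq hm.aestronglyMeasurable).2 hint2).integrable one_le_two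
  -- mean preservation
  have Pmean : ∀ h : X → ℝ, Measurable h → Integrable h π →
      ∫ x, ∫ y, h y ∂(κ x) ∂π = ∫ x, h x ∂π := by
    intro h hm hint
    have asm : AEStronglyMeasurable h ((π ⊗ₘ κ).map Prod.snd) := by
      rw [hsnd]; exact hm.aestronglyMeasurable
    have hi2 : Integrable h ((π ⊗ₘ κ).map Prod.snd) := by rw [hsnd]; exact hint
    have hcomp : Integrable (fun z : X × X => h z.2) (π ⊗ₘ κ) :=
      (integrable_map_measure asm measurable_snd.aemeasurable).1 hi2
    have e1 : ∫ z : X × X, h z.2 ∂(π ⊗ₘ κ) = ∫ x, ∫ y, h y ∂(κ x) ∂π :=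
      Measure.integral_compProd hcomp
    have e2 : ∫ z : X × X, h z.2 ∂(π ⊗ₘ κ) = ∫ x, h x ∂π := by
      have e2' := integral_map (μ := π ⊗ₘ κ) measurable_snd.aemeasurable asm
      rw [hsnd] at e2'
      exact e2'.symm
    rw [← e1, e2]
  -- integrability over the joint measure
  have intH2sq : ∀ h : X → ℝ, Measurable h → MemLp h 2 π →
      Integrable (fun z : X × X => h z.2 ^ 2) (π ⊗ₘ κ) := by
    intro h hm hL2
    have asm : AEStronglyMeasurable (fun x => h x ^ 2) ((π ⊗ₘ κ).map Prod.snd) := by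
      rw [hsnd]; exact (hm.pow_const 2).aestronglyMeasurable
    have hi2 : Integrable (fun x => h x ^ 2) ((π ⊗ₘ κ).map Prod.snd) := by
      rw [hsnd]; exact hsq_int h hL2
    exact (integrable_map_measure asm measurable_snd.aemeasurable).1 hi2
  have intH1sq : ∀ h : X → ℝ, Measurable h → MemLp h 2 π →
      Integrable (fun z : X × X => h z.1 ^ 2) (π ⊗ₘ κ) := by
    intro h hm hL2
    have asm : AEStronglyMeasurable (fun x => h x ^ 2) ((π ⊗ₘ κ).map Prod.fst) := by
      rw [hfst]; exact (hm.pow_const 2).aestronglyMeasurable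
    have hi2 : Integrable (fun x => h x ^ 2) ((π ⊗ₘ κ).map Prod.fst) := by
      rw [hfst]; exact hsq_int h hL2
    exact (integrable_map_measure asm measurable_fst.aemeasurable).1 hi2
  have intHH : ∀ h : X → ℝ, Measurable h → MemLp h 2 π →
      Integrable (fun z : X × X => h z.1 * h z.2) (π ⊗ₘ κ) := by
    intro h hm hL2
    refine (((intH1sq h hm hL2).add (intH2sq h hm hL2)).const_mul ((1:ℝ)/2)).mono'
      (((hm.comp measurable_fst).mul (hm.comp measurable_snd)).aestronglyMeasurable) ?_
    filter_upwards with z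
    rw [Real.norm_eq_abs, abs_mul]
    simp only [Pi.add_apply]
    nlinarith [sq_nonneg (|h z.1| - |h z.2|), sq_abs (h z.1), sq_abs (h z.2),
      abs_nonneg (h z.1), abs_nonneg (h z.2)]
  have hPP : ∀ h : X → ℝ, Measurable h → MemLp h 2 π →
      ∫ x, h x * (∫ y, h y ∂(κ x)) ∂π = ∫ z : X × X, h z.1 * h z.2 ∂(π ⊗ₘ κ) := by
    intro h hm hL2
    rw [Measure.integral_compProd (intHH h hm hL2)]
    refine integral_congr_ae (Filter.Eventually.of_forall fun x => ?_)
    exact (integral_const_mul (h x) h).symm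
  -- ## drift inequality
  have drift_ineq : ∀ h : X → ℝ, Measurable h → MemLp h 2 π →
      ∫ x, h x * (∫ y, h y ∂(κ x)) ∂π
        ≤ (1 - lam) * (∫ x, h x ^ 2 ∂π) + b * ∫ x, K.indicator 1 x * h x ^ 2 ∂π := by
    intro h hm hL2
    have VInt : ∀ x, Integrable V (κ x) := by
      intro x
      refine ⟨hVmeas.aestronglyMeasurable, ?_⟩
      rw [hasFiniteIntegral_iff_ofReal (Filter.Eventually.of_forall fun y => (hV0 y).le)]
      exact lt_of_le_of_lt (hdrift x) ENNReal.ofReal_lt_top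
    have hiK01 : ∀ x, 0 ≤ K.indicator (1 : X → ℝ) x ∧ K.indicator (1 : X → ℝ) x ≤ 1 := by
      intro x; by_cases hx : x ∈ K <;> simp [hx]
    have hRHSnn : ∀ x, 0 ≤ (1 - lam) * V x + b * K.indicator 1 x := fun x =>
      add_nonneg (mul_nonneg (by linarith) (hV0 x).le) (mul_nonneg hb (hiK01 x).1)
    have PVle : ∀ x, ∫ y, V y ∂(κ x) ≤ (1 - lam) * V x + b * K.indicator 1 x := by
      intro x
      rw [← ENNReal.ofReal_le_ofReal_iff (hRHSnn x),
        ofReal_integral_eq_lintegral_ofReal (VInt x)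
          (Filter.Eventually.of_forall fun y => (hV0 y).le)]
      exact hdrift x
    have hPVnn : ∀ x, 0 ≤ ∫ y, V y ∂(κ x) := fun x => integral_nonneg fun y => (hV0 y).le
    set W : X × X → ℝ := fun z => h z.1 ^ 2 * (V z.2 / V z.1) with hW
    have hWm : Measurable W :=
      ((hm.comp measurable_fst).pow_const 2).mul
        ((hVmeas.comp measurable_snd).div (hVmeas.comp measurable_fst))
    have hWnn : ∀ z, 0 ≤ W z := fun z => by
      have h1 := hV0 z.1; have h2 := hV0 z.2
      simp only [hW]
      positivity
    have hWbound : ∀ x, (h x ^ 2 / V x) * (∫ y, V y ∂(κ x))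
        ≤ (1 - lam) * h x ^ 2 + b * K.indicator 1 x * h x ^ 2 := by
      intro x
      have hVx := hV0 x
      have e : h x ^ 2 / V x * ((1 - lam) * V x + b * K.indicator 1 x)
          = (1 - lam) * h x ^ 2 + (b * K.indicator 1 x) * (h x ^ 2 / V x) := by
        field_simp
      calc (h x ^ 2 / V x) * (∫ y, V y ∂(κ x))
          ≤ h x ^ 2 / V x * ((1 - lam) * V x + b * K.indicator 1 x) :=
            mul_le_mul_of_nonneg_left (PVle x) (by positivity)
        _ = (1 - lam) * h x ^ 2 + (b * K.indicator 1 x) * (h x ^ 2 / V x) := e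
        _ ≤ (1 - lam) * h x ^ 2 + b * K.indicator 1 x * h x ^ 2 := by
            have h1 : h x ^ 2 / V x ≤ h x ^ 2 := div_le_self (sq_nonneg _) (hV1 x)
            have h1' : 0 ≤ h x ^ 2 / V x := by positivity
            have h2 : 0 ≤ b * K.indicator (1 : X → ℝ) x := mul_nonneg hb (hiK01 x).1
            nlinarith [h1, h1', h2]
    have hWbound2 : ∀ x, (h x ^ 2 / V x) * (∫ y, V y ∂(κ x)) ≤ (1 - lam + b) * h x ^ 2 := by
      intro x
      refine le_trans (hWbound x) ?_
      have h2 : b * K.indicator (1 : X → ℝ) x * h x ^ 2 ≤ b * h x ^ 2 :=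
        mul_le_mul_of_nonneg_right (mul_le_of_le_one_right hb (hiK01 x).2) (sq_nonneg _)
      nlinarith [h2]
    have IntW : Integrable W (π ⊗ₘ κ) := by
      rw [Measure.integrable_compProd_iff hWm.aestronglyMeasurable]
      constructor
      · refine Filter.Eventually.of_forall fun x => ?_
        have e : (fun y => W (x, y)) = fun y => (h x ^ 2 / V x) * V y := by
          funext y; simp only [hW]; ring
        rw [e]
        exact (VInt x).const_mul _
      · have heq : ∀ x, ∫ y, ‖W (x, y)‖ ∂(κ x) = (h x ^ 2 / V x) * (∫ y, V y ∂(κ x)) := by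
          intro x
          show ∫ y, ‖W (x, y)‖ ∂(κ x) = (h x ^ 2 / V x) * ∫ y, V y ∂(κ x)
          rw [← integral_const_mul]
          refine integral_congr_ae (Filter.Eventually.of_forall fun y => ?_)
          show ‖W (x, y)‖ = h x ^ 2 / V x * V y
          rw [Real.norm_eq_abs, abs_of_nonneg (hWnn (x, y))]
          simp only [hW]; ring
        refine ((hsq_int h hL2).const_mul (1 - lam + b)).mono' ?_ ?_
        · exact (MeasureTheory.StronglyMeasurable.integral_kernel_prod_right' (κ := κ)
            (f := fun z => ‖W z‖) (hWm.norm.stronglyMeasurable)).measurable.aestronglyMeasurable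
        · refine Filter.Eventually.of_forall fun x => ?_
          rw [Real.norm_eq_abs, abs_of_nonneg (integral_nonneg fun y => norm_nonneg _), heq x]
          exact hWbound2 x
    have IntW' : Integrable (fun z : X × X => W (z.2, z.1)) (π ⊗ₘ κ) := by
      have asm : AEStronglyMeasurable W ((π ⊗ₘ κ).map Prod.swap) := by
        rw [hswap]; exact hWm.aestronglyMeasurable
      have h1 : Integrable W ((π ⊗ₘ κ).map Prod.swap) := by rw [hswap]; exact IntW
      exact (integrable_map_measure asm measurable_swap.aemeasurable).1 h1
    have EW' : ∫ z : X × X, W (z.2, z.1) ∂(π ⊗ₘ κ) = ∫ z, W z ∂(π ⊗ₘ κ) := by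
      have asm : AEStronglyMeasurable W ((π ⊗ₘ κ).map Prod.swap) := by
        rw [hswap]; exact hWm.aestronglyMeasurable
      have e := integral_map (μ := π ⊗ₘ κ) measurable_swap.aemeasurable asm
      rw [hswap] at e
      exact e.symm
    have step1 : ∫ z : X × X, h z.1 * h z.2 ∂(π ⊗ₘ κ) ≤ ∫ z, W z ∂(π ⊗ₘ κ) := by
      have hpt : ∀ z : X × X, h z.1 * h z.2 ≤ (1/2 : ℝ) * (W z + W (z.2, z.1)) := by
        intro z
        have h2 := two_mul_le (h z.1) (h z.2) (V z.1) (V z.2) (hV0 z.1) (hV0 z.2)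
        simp only [hW]
        linarith [h2]
      calc ∫ z : X × X, h z.1 * h z.2 ∂(π ⊗ₘ κ)
          ≤ ∫ z : X × X, (1/2 : ℝ) * (W z + W (z.2, z.1)) ∂(π ⊗ₘ κ) :=
            integral_mono (intHH h hm hL2) ((IntW.add IntW').const_mul _) hpt
        _ = (1/2 : ℝ) * ((∫ z, W z ∂(π ⊗ₘ κ)) + ∫ z : X × X, W (z.2, z.1) ∂(π ⊗ₘ κ)) := by
            rw [integral_const_mul, integral_add IntW IntW']
        _ = ∫ z, W z ∂(π ⊗ₘ κ) := by rw [EW']; ring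
    have step2 : ∫ z, W z ∂(π ⊗ₘ κ) = ∫ x, (h x ^ 2 / V x) * (∫ y, V y ∂(κ x)) ∂π := by
      rw [Measure.integral_compProd IntW]
      refine integral_congr_ae (Filter.Eventually.of_forall fun x => ?_)
      show ∫ y, W (x, y) ∂(κ x) = (h x ^ 2 / V x) * ∫ y, V y ∂(κ x)
      rw [← integral_const_mul]
      refine integral_congr_ae (Filter.Eventually.of_forall fun y => ?_)
      show W (x, y) = h x ^ 2 / V x * V y
      simp only [hW]; ring
    have intInd : Integrable (fun x => b * K.indicator 1 x * h x ^ 2) π := by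
      have e : (fun x => b * K.indicator (1 : X → ℝ) x * h x ^ 2)
          = fun x => K.indicator (fun x => b * h x ^ 2) x := by
        funext x; by_cases hx : x ∈ K <;> simp [hx]
      rw [e]
      exact ((hsq_int h hL2).const_mul b).indicator hK
    have step3 : ∫ x, (h x ^ 2 / V x) * (∫ y, V y ∂(κ x)) ∂π
        ≤ ∫ x, ((1 - lam) * h x ^ 2 + b * K.indicator 1 x * h x ^ 2) ∂π := by
      have intLHS : Integrable (fun x => (h x ^ 2 / V x) * (∫ y, V y ∂(κ x))) π := by
        refine ((hsq_int h hL2).const_mul (1 - lam + b)).mono' ?_ ?_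
        · exact (((hm.pow_const 2).div hVmeas).mul
            ((MeasureTheory.StronglyMeasurable.integral_kernel_prod_right (κ := κ)
              (f := fun _ y => V y)
              ((hVmeas.comp measurable_snd).stronglyMeasurable)).measurable)).aestronglyMeasurable
        · refine Filter.Eventually.of_forall fun x => ?_
          rw [Real.norm_eq_abs, abs_of_nonneg (mul_nonneg (div_nonneg (sq_nonneg _) (hV0 x).le) (hPVnn x))]
          exact hWbound2 x
      have intRHS : Integrable (fun x => (1 - lam) * h x ^ 2 + b * K.indicator 1 x * h x ^ 2) π :=
        ((hsq_int h hL2).const_mul (1 - lam)).add intInd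
      exact integral_mono intLHS intRHS hWbound
    have step4 : ∫ x, ((1 - lam) * h x ^ 2 + b * K.indicator 1 x * h x ^ 2) ∂π
        = (1 - lam) * (∫ x, h x ^ 2 ∂π) + b * ∫ x, K.indicator 1 x * h x ^ 2 ∂π := by
      rw [integral_add ((hsq_int h hL2).const_mul (1 - lam)) intInd, integral_const_mul]
      congr 1
      rw [← integral_const_mul]
      refine integral_congr_ae (Filter.Eventually.of_forall fun x => ?_)
      ring
    calc ∫ x, h x * (∫ y, h y ∂(κ x)) ∂π
        = ∫ z : X × X, h z.1 * h z.2 ∂(π ⊗ₘ κ) := hPP h hm hL2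
      _ ≤ ∫ z, W z ∂(π ⊗ₘ κ) := step1
      _ = ∫ x, (h x ^ 2 / V x) * (∫ y, V y ∂(κ x)) ∂π := step2
      _ ≤ ∫ x, ((1 - lam) * h x ^ 2 + b * K.indicator 1 x * h x ^ 2) ∂π := step3
      _ = _ := step4
  -- ## minorization inequality
  have minor_ineq : ∀ h : X → ℝ, Measurable h → MemLp h 2 π → (∫ y, h y ∂ν = 0) →
      α * ∫ x, K.indicator 1 x * h x ^ 2 ∂π
        ≤ 2 * ((∫ x, h x ^ 2 ∂π) - ∫ x, h x * (∫ y, h y ∂(κ x)) ∂π) := by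
    intro h hm hL2 hν0
    -- Dirichlet form identity
    have IntD : Integrable (fun z : X × X => (h z.1 - h z.2) ^ 2) (π ⊗ₘ κ) := by
      have e : (fun z : X × X => (h z.1 - h z.2) ^ 2)
          = fun z : X × X => (h z.1 ^ 2 + h z.2 ^ 2) - 2 * (h z.1 * h z.2) := by
        funext z; ring
      rw [e]
      exact ((intH1sq h hm hL2).add (intH2sq h hm hL2)).sub ((intHH h hm hL2).const_mul 2)
    have marg1 : ∫ z : X × X, h z.1 ^ 2 ∂(π ⊗ₘ κ) = ∫ x, h x ^ 2 ∂π := by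
      have asm : AEStronglyMeasurable (fun x => h x ^ 2) ((π ⊗ₘ κ).map Prod.fst) := by
        rw [hfst]; exact (hm.pow_const 2).aestronglyMeasurable
      have e := integral_map (μ := π ⊗ₘ κ) measurable_fst.aemeasurable asm
      rw [hfst] at e
      exact e.symm
    have marg2 : ∫ z : X × X, h z.2 ^ 2 ∂(π ⊗ₘ κ) = ∫ x, h x ^ 2 ∂π := by
      have asm : AEStronglyMeasurable (fun x => h x ^ 2) ((π ⊗ₘ κ).map Prod.snd) := by
        rw [hsnd]; exact (hm.pow_const 2).aestronglyMeasurable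
      have e := integral_map (μ := π ⊗ₘ κ) measurable_snd.aemeasurable asm
      rw [hsnd] at e
      exact e.symm
    have dirichlet : ∫ z : X × X, (h z.1 - h z.2) ^ 2 ∂(π ⊗ₘ κ)
        = 2 * ((∫ x, h x ^ 2 ∂π) - ∫ x, h x * (∫ y, h y ∂(κ x)) ∂π) := by
      have e : (fun z : X × X => (h z.1 - h z.2) ^ 2)
          = fun z : X × X => (h z.1 ^ 2 + h z.2 ^ 2) - 2 * (h z.1 * h z.2) := by
        funext z; ring
      have iA : Integrable (fun z : X × X => h z.1 ^ 2 + h z.2 ^ 2) (π ⊗ₘ κ) :=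
        (intH1sq h hm hL2).add (intH2sq h hm hL2)
      rw [e, integral_sub iA ((intHH h hm hL2).const_mul 2),
        integral_add (intH1sq h hm hL2) (intH2sq h hm hL2), integral_const_mul,
        marg1, marg2, hPP h hm hL2]
      ring
    -- lower bound via the minorization
    have hmeas2 : Measurable fun z : X × X => ENNReal.ofReal ((h z.1 - h z.2) ^ 2) :=
      (((hm.comp measurable_fst).sub (hm.comp measurable_snd)).pow_const 2).ennreal_ofReal
    have keyLB : ENNReal.ofReal (α * ∫ x, K.indicator 1 x * h x ^ 2 ∂π)
        ≤ ENNReal.ofReal (∫ z : X × X, (h z.1 - h z.2) ^ 2 ∂(π ⊗ₘ κ)) := by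
      rw [ofReal_integral_eq_lintegral_ofReal IntD
        (Filter.Eventually.of_forall fun z => sq_nonneg _)]
      rw [Measure.lintegral_compProd hmeas2]
      have ptwise : ∀ x, K.indicator (fun x => ENNReal.ofReal α * ENNReal.ofReal (h x ^ 2)) x
          ≤ ∫⁻ y, ENNReal.ofReal ((h x - h y) ^ 2) ∂(κ x) := by
        intro x
        by_cases hx : x ∈ K
        · rw [indicator_of_mem hx]
          have hle : (ENNReal.ofReal α) • ν ≤ κ x := by
            refine Measure.le_iff.2 fun s hs => ?_
            simpa [Measure.smul_apply, smul_eq_mul] using hminor s hs x hx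
          have hnu := nu_moment ν hm (h x)
          rw [hν0, sub_zero] at hnu
          calc ENNReal.ofReal α * ENNReal.ofReal (h x ^ 2)
              ≤ ENNReal.ofReal α * ∫⁻ y, ENNReal.ofReal ((h x - h y) ^ 2) ∂ν :=
                mul_le_mul_right hnu _
            _ = ∫⁻ y, ENNReal.ofReal ((h x - h y) ^ 2) ∂((ENNReal.ofReal α) • ν) := by
                rw [lintegral_smul_measure, smul_eq_mul]
            _ ≤ ∫⁻ y, ENNReal.ofReal ((h x - h y) ^ 2) ∂(κ x) := lintegral_mono' hle le_rfl
        · rw [indicator_of_notMem hx]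
          exact zero_le
      calc ENNReal.ofReal (α * ∫ x, K.indicator 1 x * h x ^ 2 ∂π)
          = ENNReal.ofReal α * ENNReal.ofReal (∫ x, K.indicator 1 x * h x ^ 2 ∂π) := by
            rw [ENNReal.ofReal_mul hα.le]
        _ = ENNReal.ofReal α * ∫⁻ x, ENNReal.ofReal (K.indicator 1 x * h x ^ 2) ∂π := by
            congr 1
            refine ofReal_integral_eq_lintegral_ofReal ?_
              (Filter.Eventually.of_forall fun x => ?_)
            · have e : (fun x => K.indicator (1 : X → ℝ) x * h x ^ 2)
                  = fun x => K.indicator (fun x => h x ^ 2) x := by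
                funext x; by_cases hx : x ∈ K <;> simp [hx]
              rw [e]
              exact (hsq_int h hL2).indicator hK
            · by_cases hx : x ∈ K <;> simp [hx, sq_nonneg]
        _ = ∫⁻ x, K.indicator (fun x => ENNReal.ofReal α * ENNReal.ofReal (h x ^ 2)) x ∂π := by
            rw [← lintegral_const_mul (f := fun x => ENNReal.ofReal (K.indicator 1 x * h x ^ 2)) _
              (((measurable_one.indicator hK : Measurable (K.indicator (1 : X → ℝ))).mul
                (hm.pow_const 2)).ennreal_ofReal)]
            refine lintegral_congr fun x => ?_
            by_cases hx : x ∈ K <;> simp [hx, ENNReal.ofReal_mul, sq_nonneg]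
        _ ≤ ∫⁻ x, ∫⁻ y, ENNReal.ofReal ((h x - h y) ^ 2) ∂(κ x) ∂π := lintegral_mono ptwise
    have Dnn : 0 ≤ ∫ z : X × X, (h z.1 - h z.2) ^ 2 ∂(π ⊗ₘ κ) :=
      integral_nonneg fun z => sq_nonneg _
    have := (ENNReal.ofReal_le_ofReal_iff Dnn).1 keyLB
    rw [dirichlet] at this
    exact this
  -- ## the variance bound: ⟨h, Ph⟩ ≤ (1 - β) ‖h‖² for mean-zero h
  have gap : ∀ h : X → ℝ, Measurable h → MemLp h 2 π → (∫ x, h x ∂π = 0) →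
      ∫ x, h x * (∫ y, h y ∂(κ x)) ∂π
        ≤ (1 - lam / (1 + 2 * b / α)) * ∫ x, h x ^ 2 ∂π := by
    intro h hm hL2 h0
    set c : ℝ := ∫ y, h y ∂ν with hc
    set h' : X → ℝ := fun x => h x - c with hh'
    have hm' : Measurable h' := hm.sub measurable_const
    have hL2' : MemLp h' 2 π := by
      have := hL2.sub (memLp_const (μ := π) c)
      exact this
    have hν0' : ∫ y, h' y ∂ν = 0 := by
      by_cases hiν : Integrable h ν
      · rw [hh']
        rw [integral_sub hiν (integrable_const c), integral_const]
        simp [measure_univ, hc]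
      · have hnint : ¬ Integrable h' ν := by
          intro hcon
          exact hiν ((hcon.add (integrable_const (μ := ν) c)).congr
            (Filter.Eventually.of_forall fun x => by simp [hh']))
        exact integral_undef hnint
    -- relations between h and h'
    have relA : ∫ x, h' x ^ 2 ∂π = (∫ x, h x ^ 2 ∂π) + c ^ 2 := by
      have e : (fun x => h' x ^ 2) = fun x => (h x ^ 2 - (2 * c) * h x) + c ^ 2 := by
        funext x; simp only [hh']; ring
      have hsub : Integrable (fun x => h x ^ 2 - (2 * c) * h x) π :=
        (hsq_int h hL2).sub ((hL2.integrable one_le_two).const_mul (2 * c))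
      rw [e, integral_add hsub (integrable_const _),
        integral_sub (hsq_int h hL2) ((hL2.integrable one_le_two).const_mul (2 * c)),
        integral_const_mul, h0, integral_const]
      simp [measure_univ]
    have aeP : ∀ᵐ x ∂π, ∫ y, h' y ∂(κ x) = (∫ y, h y ∂(κ x)) - c := by
      filter_upwards [aeIntKer h hm hL2] with x hx
      rw [hh']
      rw [integral_sub hx (integrable_const c), integral_const]
      simp [measure_univ]
    have hPmean0 : ∫ x, (∫ y, h y ∂(κ x)) ∂π = 0 := by
      rw [Pmean h hm (hL2.integrable one_le_two)]; exact h0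
    have relB : ∫ x, h' x * (∫ y, h' y ∂(κ x)) ∂π
        = (∫ x, h x * (∫ y, h y ∂(κ x)) ∂π) + c ^ 2 := by
      have e1 : ∫ x, h' x * (∫ y, h' y ∂(κ x)) ∂π
          = ∫ x, (h x * (∫ y, h y ∂(κ x)) - c * (∫ y, h y ∂(κ x)) - c * h x + c ^ 2) ∂π := by
        refine integral_congr_ae ?_
        filter_upwards [aeP] with x hx
        rw [hh', hx]
        ring
      have iPh : Integrable (fun x => ∫ y, h y ∂(κ x)) π :=
        (Pmem h hm hL2).integrable one_le_two
      have i1 : Integrable (fun x => h x * (∫ y, h y ∂(κ x))) π := mul_int hL2 (Pmem h hm hL2)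
      have i2 : Integrable (fun x => h x * (∫ y, h y ∂(κ x)) - c * (∫ y, h y ∂(κ x))) π :=
        i1.sub (iPh.const_mul c)
      have i3 : Integrable
          (fun x => h x * (∫ y, h y ∂(κ x)) - c * (∫ y, h y ∂(κ x)) - c * h x) π :=
        i2.sub ((hL2.integrable one_le_two).const_mul c)
      rw [e1, integral_add i3 (integrable_const _), integral_sub i2
        ((hL2.integrable one_le_two).const_mul c), integral_sub i1 (iPh.const_mul c),
        integral_const_mul, integral_const_mul, hPmean0, h0, integral_const]
      simp [measure_univ]
    -- apply the two inequalities to h'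
    have dA := drift_ineq h' hm' hL2'
    have dB := minor_ineq h' hm' hL2' hν0'
    rw [relA, relB] at dA dB
    exact combine_ineq lam b α _ _ _ c hlam hα hb dA dB
  -- ## conclusion via Cauchy–Schwarz for the PSD bilinear form
  set q : X → ℝ := fun x => ∫ y, g y ∂(κ x) with hq
  have hqm : Measurable q := Pmeas g hgm
  have hqL2 : MemLp q 2 π := Pmem g hgm hg
  have hq0 : ∫ x, q x ∂π = 0 := by
    rw [hq, Pmean g hgm (hg.integrable one_le_two)]; exact hg0
  set c0 : ℝ := 1 - lam / (1 + 2 * b / α) with hc0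
  have hd : (0:ℝ) ≤ 2 * b / α := by positivity
  have hc0nn : 0 ≤ c0 := by
    have h1 : lam / (1 + 2 * b / α) ≤ lam := div_le_self hlam.le (by linarith)
    rw [hc0]; linarith
  set I2 := ∫ x, g x ^ 2 ∂π with hI2
  set N2 := ∫ x, q x * q x ∂π with hN2d
  have hN2 : ∫ x, q x ^ 2 ∂π = N2 :=
    integral_congr_ae (Filter.Eventually.of_forall fun x => pow_two (q x))
  have hPgq : ∫ x, q x * (∫ y, g y ∂(κ x)) ∂π = N2 := rfl
  have hsymm : ∫ x, g x * (∫ y, q y ∂(κ x)) ∂π = N2 := by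
    rw [hrev g q hg hqL2]
  set A := ∫ x, g x * (∫ y, g y ∂(κ x)) ∂π with hA
  set Cc := ∫ x, q x * (∫ y, q y ∂(κ x)) ∂π with hCc
  have quad : ∀ t : ℝ, 0 ≤ A * (t * t) + (2 * N2) * t + Cc := by
    intro t
    have hw : MemLp (fun x => q x + t * g x) 2 π := hqL2.add (hg.const_mul t)
    have h0 := hpsd _ hw
    have aeE : ∀ᵐ x ∂π, ∫ y, (q y + t * g y) ∂(κ x)
        = (∫ y, q y ∂(κ x)) + t * (∫ y, g y ∂(κ x)) := by
      filter_upwards [aeIntKer q hqm hqL2, aeIntKer g hgm hg] with x h1 h2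
      rw [integral_add h1 (h2.const_mul t), integral_const_mul]
    have e1 : ∫ x, (q x + t * g x) * (∫ y, (q y + t * g y) ∂(κ x)) ∂π
        = ∫ x, (q x * (∫ y, q y ∂(κ x)) + t * (q x * (∫ y, g y ∂(κ x)))
            + t * (g x * (∫ y, q y ∂(κ x))) + t * t * (g x * (∫ y, g y ∂(κ x)))) ∂π := by
      refine integral_congr_ae ?_
      filter_upwards [aeE] with x hx
      rw [hx]; ring
    have i1 : Integrable (fun x => q x * (∫ y, q y ∂(κ x))) π :=
      mul_int hqL2 (Pmem q hqm hqL2)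
    have i2 : Integrable (fun x => t * (q x * (∫ y, g y ∂(κ x)))) π :=
      (mul_int hqL2 (Pmem g hgm hg)).const_mul t
    have i3 : Integrable (fun x => t * (g x * (∫ y, q y ∂(κ x)))) π :=
      (mul_int hg (Pmem q hqm hqL2)).const_mul t
    have i4 : Integrable (fun x => t * t * (g x * (∫ y, g y ∂(κ x)))) π :=
      (mul_int hg (Pmem g hgm hg)).const_mul (t * t)
    have esum : ∫ x, (q x * (∫ y, q y ∂(κ x)) + t * (q x * (∫ y, g y ∂(κ x)))
        + t * (g x * (∫ y, q y ∂(κ x))) + t * t * (g x * (∫ y, g y ∂(κ x)))) ∂π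
        = Cc + t * N2 + t * N2 + t * t * A := by
      have i12 : Integrable (fun x => q x * (∫ y, q y ∂(κ x))
          + t * (q x * (∫ y, g y ∂(κ x)))) π := i1.add i2
      have i123 : Integrable (fun x => q x * (∫ y, q y ∂(κ x))
          + t * (q x * (∫ y, g y ∂(κ x))) + t * (g x * (∫ y, q y ∂(κ x)))) π := i12.add i3
      rw [integral_add i123 i4, integral_add i12 i3,
        integral_add i1 i2, integral_const_mul, integral_const_mul, integral_const_mul,
        hPgq, hsymm, ← hCc, ← hA]
    have h0' : (0:ℝ) ≤ Cc + t * N2 + t * N2 + t * t * A := by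
      rw [← esum, ← e1]
      exact h0
    linarith only [h0']
  have hdisc := discrim_le_zero quad
  rw [discrim] at hdisc
  have hAineq : A ≤ c0 * I2 := gap g hgm hg hg0
  have hCineq : Cc ≤ c0 * N2 := by
    have := gap q hqm hqL2 hq0
    rw [hN2] at this
    exact this
  have hAnn : 0 ≤ A := hpsd g hg
  have hCnn : 0 ≤ Cc := hpsd q hqL2
  have hN2nn : 0 ≤ N2 := integral_nonneg fun x => mul_self_nonneg _
  have hI2nn : 0 ≤ I2 := integral_nonneg fun x => sq_nonneg _
  clear_value A Cc N2 I2 c0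
  have key : N2 ≤ c0 ^ 2 * I2 := by
    rcases eq_or_lt_of_le hN2nn with h0' | h0'
    · rw [← h0']; positivity
    · have h1 : A * Cc ≤ (c0 * I2) * (c0 * N2) :=
        mul_le_mul hAineq hCineq hCnn (mul_nonneg hc0nn hI2nn)
      have h2 : N2 ^ 2 ≤ A * Cc := by nlinarith only [hdisc]
      refine le_of_mul_le_mul_right ?_ h0'
      nlinarith only [h2, h1]
  -- transfer back from g to f
  have hset : π {x | ¬ f x = g x} = 0 := ae_iff.mp hfg
  set t0 := toMeasurable π {x | ¬ f x = g x} with ht0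
  have ht0m : MeasurableSet t0 := measurableSet_toMeasurable _ _
  have hπt0 : π t0 = 0 := by rw [ht0, measure_toMeasurable]; exact hset
  have hκ0 : ∀ᵐ x ∂π, κ x t0 = 0 := by
    have hl : ∫⁻ x, κ x t0 ∂π = 0 := by
      rw [← Measure.bind_apply ht0m κ.measurable.aemeasurable, hbind]; exact hπt0
    filter_upwards [(lintegral_eq_zero_iff (κ.measurable_coe ht0m)).1 hl] with x hx using hx
  have hPfg : ∀ᵐ x ∂π, ∫ y, f y ∂(κ x) = ∫ y, g y ∂(κ x) := by
    filter_upwards [hκ0] with x hx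
    refine integral_congr_ae ?_
    rw [Filter.EventuallyEq, ae_iff]
    exact measure_mono_null (fun y hy => subset_toMeasurable π _ hy) hx
  have hLHS : ∫ x, (∫ y, f y ∂(κ x)) ^ 2 ∂π = ∫ x, q x ^ 2 ∂π := by
    refine integral_congr_ae ?_
    filter_upwards [hPfg] with x hx
    rw [hx, hq]
  have hRHS : ∫ x, f x ^ 2 ∂π = I2 := by
    rw [hI2]
    exact integral_congr_ae (by filter_upwards [hfg] with x hx; rw [hx])
  rw [hLHS, hRHS, hN2]
  calc Real.sqrt N2 ≤ Real.sqrt (c0 ^ 2 * I2) := Real.sqrt_le_sqrt key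
    _ = c0 * Real.sqrt I2 := by rw [Real.sqrt_mul (sq_nonneg c0), Real.sqrt_sq hc0nn]
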